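/- arXiv:2103.09175 — 3 statements merged into one kernel-verified Lean document; each statement's English description precedes it below -/
import Mathlib

section
/- Closed form for the rolling average variance in the non-overlapping regime: with s_{p,m} := (1/(m−p)²) · Σ_{i=1}^{m−p} Σ_{j=1}^{m−p} NLRC_{p,m}(i,j), for every integer k ≥ 1 one has s_{p, 2p+k} = (1/(p+k)²) · ( p² · s_{p,2p} + k · (φ₀ + φ₁ + ⋯ + φ_p)² ), where φ₀ := −1. -/
open Matrix Finset

noncomputable def psiF (p : ℕ) (φ : ℕ → ℝ) (z : ℤ) : ℝ :=
  if 0 ≤ z ∧ z ≤ (p : ℤ) then φ z.toNat else 0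

lemma psiF_nat (p : ℕ) (φ : ℕ → ℝ) (u : ℕ) (hu : u ≤ p) : psiF p φ (u : ℤ) = φ u := by
  simp only [psiF]
  rw [if_pos ⟨Int.natCast_nonneg u, by exact_mod_cast hu⟩, Int.toNat_natCast]

lemma psiF_neg {p : ℕ} {φ : ℕ → ℝ} {z : ℤ} (h : z < 0 ∨ (p:ℤ) < z) : psiF p φ z = 0 := by
  simp only [psiF]
  rw [if_neg]; omega

/-- Band sum collapse. -/
lemma band_sum (p n t : ℕ) (φ : ℕ → ℝ) (htn : t < n) (h : ℕ → ℝ) :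
    ∑ c ∈ range n, psiF p φ ((t:ℤ) - c) * h c
      = ∑ u ∈ range (min t p + 1), φ u * h (t - u) := by
  have h1 : ∑ c ∈ range n, psiF p φ ((t:ℤ) - c) * h c
      = ∑ c ∈ Icc (t - p) t, psiF p φ ((t:ℤ) - c) * h c := by
    refine (Finset.sum_subset ?_ ?_).symm
    · intro c hc
      simp only [mem_Icc] at hc
      simp only [mem_range]; omega
    · intro c hc hc'
      simp only [mem_Icc] at hc'
      rw [psiF_neg, zero_mul]
      omega
  rw [h1]
  refine Finset.sum_nbij' (fun c => t - c) (fun u => t - u) ?_ ?_ ?_ ?_ ?_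
  · intro c hc; simp only [mem_Icc] at hc; simp only [mem_range]; omega
  · intro u hu; simp only [mem_range] at hu; simp only [mem_Icc]; omega
  · intro c hc; simp only [mem_Icc] at hc; omega
  · intro u hu; simp only [mem_range] at hu; omega
  · intro c hc
    simp only [mem_Icc] at hc
    have h2 : (t:ℤ) - c = ((t - c : ℕ) : ℤ) := by omega
    rw [h2, psiF_nat p φ _ (by omega)]
    congr 2
    omega

/-- Collapse a `Fin m` sum supported on indices `< p`. -/
lemma sum_fin_lt {m p : ℕ} (hpm : p ≤ m) (g : Fin p → ℝ) :
    ∑ c : Fin m, (if h : (c : ℕ) < p then g ⟨c, h⟩ else 0) = ∑ c : Fin p, g c := by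
  rw [Fin.sum_univ_eq_sum_range (fun c => if h : c < p then g ⟨c, h⟩ else 0) m]
  have h2 : ∑ c : Fin p, g c
      = ∑ c ∈ range p, if h : c < p then g ⟨c, h⟩ else 0 := by
    rw [← Fin.sum_univ_eq_sum_range (fun c => if h : c < p then g ⟨c, h⟩ else 0) p]
    refine Finset.sum_congr rfl fun c _ => ?_
    rw [dif_pos c.isLt]
  rw [h2]
  refine (Finset.sum_subset (Finset.range_subset_range.2 hpm) ?_).symm
  intro c _ hc
  simp only [mem_range] at hc
  rw [dif_neg hc]

lemma cov_lemma (p : ℕ) (φ : ℕ → ℝ) (hφ0 : φ 0 = -1) (σ2 : ℝ) (γ : ℤ → ℝ)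
    (hsym : ∀ j : ℤ, γ (-j) = γ j)
    (hYW0 : γ 0 = (∑ i ∈ Finset.Icc 1 p, φ i * γ (i : ℤ)) + σ2)
    (hYW : ∀ j : ℤ, 1 ≤ j → γ j = ∑ i ∈ Finset.Icc 1 p, φ i * γ (j - (i : ℤ)))
    (a b : ℤ) (hba : b ≤ a) :
    (∑ i ∈ Finset.range (p+1), φ i * γ (a - i - b)) = if a = b then -σ2 else 0 := by
  have hsplit : ∑ i ∈ Finset.range (p+1), φ i * γ (a - i - b)
      = φ 0 * γ (a - b) + ∑ i ∈ Finset.Icc 1 p, φ i * γ ((a - b) - i) := by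
    rw [Finset.sum_range_succ' (fun i => φ i * γ (a - i - b)) p]
    rw [add_comm]
    congr 1
    · norm_num
    · refine Finset.sum_nbij' (fun k => k + 1) (fun i => i - 1) ?_ ?_ ?_ ?_ ?_
      · intro k hk; simp only [mem_range] at hk; simp only [mem_Icc]; omega
      · intro i hi; simp only [mem_Icc] at hi; simp only [mem_range]; omega
      · intro k _; omega
      · intro i hi; simp only [mem_Icc] at hi; omega
      · intro k hk
        congr 1
        push_cast
        ring
  rw [hsplit]
  rcases eq_or_lt_of_le hba with heq | hlt
  · subst heq
    rw [if_pos rfl]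
    simp only [sub_self, zero_sub]
    have h1 : ∑ i ∈ Finset.Icc 1 p, φ i * γ (-(i:ℤ)) = ∑ i ∈ Finset.Icc 1 p, φ i * γ (i:ℤ) :=
      Finset.sum_congr rfl fun i _ => by rw [hsym]
    rw [h1, hφ0, hYW0]
    ring
  · rw [if_neg (by omega)]
    have h1 : (1:ℤ) ≤ a - b := by omega
    rw [hφ0, ← hYW (a - b) h1]
    ring

lemma inv_entry (p : ℕ) (hp : 1 ≤ p)
    (φ : ℕ → ℝ) (hφ0 : φ 0 = -1)
    (σ2 : ℝ) (hσ : 0 < σ2)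
    (γ : ℤ → ℝ)
    (hsym : ∀ j : ℤ, γ (-j) = γ j)
    (hYW0 : γ 0 = (∑ i ∈ Finset.Icc 1 p, φ i * γ (i : ℤ)) + σ2)
    (hYW : ∀ j : ℤ, 1 ≤ j → γ j = ∑ i ∈ Finset.Icc 1 p, φ i * γ (j - (i : ℤ)))
    (Γ : (m : ℕ) → Matrix (Fin m) (Fin m) ℝ)
    (hΓ : ∀ m : ℕ, ∀ i j : Fin m, Γ m i j = γ |(i : ℤ) - (j : ℤ)|)
    (hpd : ∀ m : ℕ, 1 ≤ m → (Γ m).PosDef)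
    (m : ℕ) (hm : p ≤ m) (i j : Fin (m - p)) :
    σ2 * (Γ m)⁻¹ ⟨p + i, by have := i.isLt; omega⟩ ⟨p + j, by have := j.isLt; omega⟩
      = ∑ t ∈ Finset.range (m - p), psiF p φ ((t:ℤ) - i) * psiF p φ ((t:ℤ) - j) := by
  have hm1 : 1 ≤ m := hp.trans hm
  have γabs : ∀ z : ℤ, γ |z| = γ z := by
    intro z
    rcases abs_choice z with h | h
    · rw [h]
    · rw [h, hsym]
  have hΓ' : ∀ (n : ℕ) (a b : Fin n), Γ n a b = γ ((a:ℤ) - b) := fun n a b =>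
    (hΓ n a b).trans (γabs _)
  set T : Matrix (Fin m) (Fin m) ℝ := Matrix.of fun a b : Fin m =>
    if (a:ℕ) < p then (if (a:ℕ) = (b:ℕ) then (1:ℝ) else 0)
    else -psiF p φ ((a:ℤ) - (b:ℤ)) with hT
  set D : Matrix (Fin m) (Fin m) ℝ := Matrix.of fun a b : Fin m =>
    if (a:ℕ) < p ∧ (b:ℕ) < p then γ ((a:ℤ) - b)
    else if (a:ℕ) = (b:ℕ) then σ2 else 0 with hD
  set E : Matrix (Fin m) (Fin m) ℝ := Matrix.of fun a b : Fin m =>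
    if h : (a:ℕ) < p ∧ (b:ℕ) < p then (Γ p)⁻¹ ⟨a, h.1⟩ ⟨b, h.2⟩
    else if (a:ℕ) = (b:ℕ) then σ2⁻¹ else 0 with hE
  -- entries of T * Γ m
  have hTG : ∀ a d : Fin m, (T * Γ m) a d
      = if (a:ℕ) < p then γ ((a:ℤ) - d)
        else -∑ k ∈ Finset.range (p+1), φ k * γ ((a:ℤ) - k - d) := by
    intro a d
    rw [Matrix.mul_apply]
    by_cases ha : (a:ℕ) < p
    · rw [if_pos ha]
      have hterm : ∀ c : Fin m, T a c * Γ m c d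
          = if a = c then γ ((a:ℤ) - d) else 0 := by
        intro c
        rw [hΓ']
        by_cases hac : a = c
        · rw [if_pos hac, ← hac]
          simp [hT, ha]
        · rw [if_neg hac]
          have hv : ¬ (a:ℕ) = (c:ℕ) := fun h => hac (Fin.ext h)
          simp only [hT, Matrix.of_apply, if_pos ha, if_neg hv, zero_mul]
      rw [Finset.sum_congr rfl fun c _ => hterm c, Finset.sum_ite_eq]
      simp
    · rw [if_neg ha]
      have ha' : p ≤ (a:ℕ) := le_of_not_gt ha
      have hterm : ∀ c : Fin m, T a c * Γ m c d
          = -(psiF p φ ((a:ℤ) - c) * γ ((c:ℤ) - d)) := by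
        intro c
        rw [hΓ']
        simp only [hT, Matrix.of_apply, if_neg ha]
        ring
      rw [Finset.sum_congr rfl fun c _ => hterm c]
      rw [Finset.sum_neg_distrib]
      congr 1
      rw [Fin.sum_univ_eq_sum_range
        (fun c => psiF p φ (((a:ℕ):ℤ) - c) * γ ((c:ℤ) - ((d:ℕ):ℤ))) m]
      rw [band_sum p m a φ a.isLt (fun c => γ ((c:ℤ) - ((d:ℕ):ℤ)))]
      rw [Nat.min_eq_right ha']
      refine Finset.sum_congr rfl fun u hu => ?_
      simp only [Finset.mem_range] at hu
      have hua : u ≤ (a:ℕ) := le_trans (by omega) ha'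
      congr 2
      omega
  have hcov : ∀ a b : ℤ, b ≤ a →
      (∑ k ∈ Finset.range (p+1), φ k * γ (a - k - b)) = if a = b then -σ2 else 0 :=
    cov_lemma p φ hφ0 σ2 γ hsym hYW0 hYW
  have h1 : T * Γ m * Tᵀ = D := by
    have hHalf : ∀ a b : Fin m, (b:ℕ) ≤ (a:ℕ) → (T * Γ m * Tᵀ) a b = D a b := by
      intro a b hba
      rw [Matrix.mul_apply]
      by_cases ha : (a:ℕ) < p
      · have hb : (b:ℕ) < p := lt_of_le_of_lt hba ha
        have hterm : ∀ d : Fin m, (T * Γ m) a d * Tᵀ d b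
            = if b = d then γ ((a:ℤ) - b) else 0 := by
          intro d
          rw [Matrix.transpose_apply, hTG a d, if_pos ha]
          by_cases hbd : b = d
          · rw [if_pos hbd, ← hbd]
            simp [hT, hb]
          · rw [if_neg hbd]
            have hv : ¬ (b:ℕ) = (d:ℕ) := fun h => hbd (Fin.ext h)
            simp [hT, hb, hv]
        rw [Finset.sum_congr rfl fun d _ => hterm d, Finset.sum_ite_eq]
        simp [hD, ha, hb]
      · have ha' : p ≤ (a:ℕ) := le_of_not_gt ha
        by_cases hb : (b:ℕ) < p
        · have hterm : ∀ d : Fin m, (T * Γ m) a d * Tᵀ d b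
              = if b = d then -∑ k ∈ Finset.range (p+1), φ k * γ ((a:ℤ) - k - b) else 0 := by
            intro d
            rw [Matrix.transpose_apply, hTG a d, if_neg ha]
            by_cases hbd : b = d
            · rw [if_pos hbd, ← hbd]
              simp [hT, hb]
            · rw [if_neg hbd]
              have hv : ¬ (b:ℕ) = (d:ℕ) := fun h => hbd (Fin.ext h)
              simp [hT, hb, hv]
          rw [Finset.sum_congr rfl fun d _ => hterm d, Finset.sum_ite_eq]
          have hab : ¬ ((a:ℤ) = (b:ℤ)) := by
            have : (b:ℕ) < (a:ℕ) := lt_of_lt_of_le hb ha'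
            omega
          have hab' : ¬ ((a:ℕ) = (b:ℕ)) := by omega
          simp only [Finset.mem_univ, if_true]
          rw [hcov _ _ (by exact_mod_cast hba), if_neg hab, neg_zero]
          simp [hD, ha, hab']
        · have hb' : p ≤ (b:ℕ) := le_of_not_gt hb
          have hterm : ∀ d : Fin m, (T * Γ m) a d * Tᵀ d b
              = psiF p φ ((b:ℤ) - d) *
                (∑ k ∈ Finset.range (p+1), φ k * γ ((a:ℤ) - k - d)) := by
            intro d
            rw [Matrix.transpose_apply, hTG a d, if_neg ha]
            simp only [hT, Matrix.of_apply, if_neg hb]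
            ring
          rw [Finset.sum_congr rfl fun d _ => hterm d]
          rw [Fin.sum_univ_eq_sum_range (fun d => psiF p φ (((b:ℕ):ℤ) - d) *
            (∑ k ∈ Finset.range (p+1), φ k * γ (((a:ℕ):ℤ) - k - d))) m]
          rw [band_sum p m b φ b.isLt
            (fun d => ∑ k ∈ Finset.range (p+1), φ k * γ (((a:ℕ):ℤ) - k - (d:ℤ)))]
          rw [Nat.min_eq_right hb']
          have hterm2 : ∀ u ∈ Finset.range (p+1),
              φ u * (∑ k ∈ Finset.range (p+1), φ k * γ (((a:ℕ):ℤ) - k - (((b:ℕ) - u : ℕ):ℤ)))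
              = φ u * (if ((a:ℕ):ℤ) = ((b:ℕ):ℤ) - u then -σ2 else 0) := by
            intro u hu
            simp only [Finset.mem_range] at hu
            have hub : u ≤ (b:ℕ) := le_trans (by omega) hb'
            have hcast : (((b:ℕ) - u : ℕ):ℤ) = ((b:ℕ):ℤ) - u := by omega
            rw [hcast, hcov ((a:ℕ):ℤ) (((b:ℕ):ℤ) - u) (by omega)]
          rw [Finset.sum_congr rfl hterm2]
          by_cases hab : (a:ℕ) = (b:ℕ)
          · rw [Finset.sum_eq_single 0]
            · rw [if_pos (by omega), hφ0]
              simp [hD, ha, hb, hab]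
            · intro u hu hu0
              rw [if_neg (by omega), mul_zero]
            · intro h0
              exact absurd (Finset.mem_range.2 (by omega)) h0
          · rw [Finset.sum_eq_zero]
            · simp [hD, ha, hb, hab]
            · intro u hu
              simp only [Finset.mem_range] at hu
              rw [if_neg (by omega), mul_zero]
    have hDsymm : ∀ a b : Fin m, D a b = D b a := by
      intro a b
      simp only [hD, Matrix.of_apply]
      have hγ : γ ((a:ℤ) - b) = γ ((b:ℤ) - a) := by
        rw [← hsym ((b:ℤ) - a)]
        congr 1
        ring
      rw [hγ]
      rw [if_congr (show ((a:ℕ) < p ∧ (b:ℕ) < p) ↔ ((b:ℕ) < p ∧ (a:ℕ) < p) from and_comm)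
        rfl (if_congr (show ((a:ℕ) = (b:ℕ)) ↔ ((b:ℕ) = (a:ℕ)) from eq_comm) rfl rfl)]
    have hGs : (Γ m)ᵀ = Γ m := by
      ext a b
      rw [Matrix.transpose_apply, hΓ', hΓ', ← hsym ((a:ℤ) - b)]
      congr 1
      ring
    have hMsymm : (T * Γ m * Tᵀ)ᵀ = T * Γ m * Tᵀ := by
      rw [Matrix.transpose_mul, Matrix.transpose_mul, Matrix.transpose_transpose, hGs]
      simp only [Matrix.mul_assoc]
    ext a b
    rcases le_or_gt (b:ℕ) (a:ℕ) with h | h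
    · exact hHalf a b h
    · have e1 : (T * Γ m * Tᵀ) a b = (T * Γ m * Tᵀ) b a := by
        conv_lhs => rw [← hMsymm]
        rfl
      rw [e1, hHalf b a h.le]
      exact hDsymm b a
  have h2 : E * D = 1 := by
    have hdet : IsUnit (Γ p).det := isUnit_iff_ne_zero.2 (ne_of_gt (hpd p hp).det_pos)
    have hGpinv : (Γ p)⁻¹ * Γ p = 1 := Matrix.nonsing_inv_mul _ hdet
    ext a b
    rw [Matrix.mul_apply]
    by_cases ha : (a:ℕ) < p
    · by_cases hb : (b:ℕ) < p
      · have hterm : ∀ c : Fin m, E a c * D c b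
            = if h : (c:ℕ) < p then
                (Γ p)⁻¹ ⟨a, ha⟩ ⟨(c:ℕ), h⟩ * Γ p ⟨(c:ℕ), h⟩ ⟨b, hb⟩ else 0 := by
          intro c
          by_cases hc : (c:ℕ) < p
          · rw [dif_pos hc]
            simp only [hE, hD, Matrix.of_apply, dif_pos (And.intro ha hc),
              if_pos (And.intro hc hb)]
            congr 1
            rw [hΓ']
          · rw [dif_neg hc]
            have hac : ¬ (a:ℕ) = (c:ℕ) := by omega
            simp [hE, ha, hc, hac]
        rw [Finset.sum_congr rfl fun c _ => hterm c,
          sum_fin_lt hm (fun c => (Γ p)⁻¹ ⟨a, ha⟩ c * Γ p c ⟨b, hb⟩)]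
        have hmm : ∑ c : Fin p, (Γ p)⁻¹ ⟨a, ha⟩ c * Γ p c ⟨b, hb⟩
            = ((Γ p)⁻¹ * Γ p) ⟨a, ha⟩ ⟨b, hb⟩ := (Matrix.mul_apply).symm
        rw [hmm, hGpinv]
        simp [Matrix.one_apply, Fin.ext_iff]
      · rw [Finset.sum_eq_zero]
        · have hab : a ≠ b := fun h => hb (h ▸ ha)
          exact (Matrix.one_apply_ne hab).symm
        · intro c _
          by_cases hc : (c:ℕ) < p
          · have hcb : ¬ (c:ℕ) = (b:ℕ) := by omega
            have : D c b = 0 := by simp [hD, hb, hcb]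
            rw [this, mul_zero]
          · have hac : ¬ (a:ℕ) = (c:ℕ) := by omega
            have : E a c = 0 := by simp [hE, hc, hac]
            rw [this, zero_mul]
    · have hterm : ∀ c : Fin m, E a c * D c b
          = if a = c then σ2⁻¹ * D c b else 0 := by
        intro c
        by_cases hac : a = c
        · rw [if_pos hac, ← hac]
          have : E a a = σ2⁻¹ := by simp [hE, ha]
          rw [this]
        · rw [if_neg hac]
          have hv : ¬ (a:ℕ) = (c:ℕ) := fun h => hac (Fin.ext h)
          have : E a c = 0 := by simp [hE, ha, hv]
          rw [this, zero_mul]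
      rw [Finset.sum_congr rfl fun c _ => hterm c, Finset.sum_ite_eq]
      simp only [Finset.mem_univ, if_true]
      by_cases hab : a = b
      · rw [← hab]
        have : D a a = σ2 := by simp [hD, ha]
        rw [this, inv_mul_cancel₀ (ne_of_gt hσ), hab, Matrix.one_apply_eq]
      · have hv : ¬ (a:ℕ) = (b:ℕ) := fun h => hab (Fin.ext h)
        have : D a b = 0 := by simp [hD, ha, hv]
        rw [this, mul_zero]
        exact (Matrix.one_apply_ne hab).symm
  have hTdet : IsUnit Tᵀ.det := by
    rw [Matrix.det_transpose]
    have hdet1 : T.det = 1 := by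
      rw [Matrix.det_of_lowerTriangular T ?_]
      · apply Finset.prod_eq_one
        intro a _
        by_cases ha : (a:ℕ) < p
        · simp [hT, ha]
        · have h0 : ((a:ℕ):ℤ) - ((a:ℕ):ℤ) = 0 := sub_self _
          simp only [hT, Matrix.of_apply, if_neg ha, h0]
          have : psiF p φ 0 = φ 0 := by
            have := psiF_nat p φ 0 (Nat.zero_le p)
            simpa using this
          rw [this, hφ0]
          norm_num
      · intro x y hxy
        have hxy' : x < y := OrderDual.toDual_lt_toDual.mp hxy
        have hv : (x:ℕ) < (y:ℕ) := hxy'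
        by_cases hx2 : (x:ℕ) < p
        · have hne : ¬ (x:ℕ) = (y:ℕ) := by omega
          simp [hT, hx2, hne]
        · have hneg : ((x:ℕ):ℤ) - ((y:ℕ):ℤ) < 0 := by omega
          simp [hT, hx2, psiF_neg (Or.inl hneg)]
    rw [hdet1]
    exact isUnit_one
  have hTG2 : T * Γ m = D * Tᵀ⁻¹ := by
    calc T * Γ m = (T * Γ m) * (Tᵀ * Tᵀ⁻¹) := by
          rw [Matrix.mul_nonsing_inv _ hTdet, Matrix.mul_one]
      _ = (T * Γ m * Tᵀ) * Tᵀ⁻¹ := by simp only [Matrix.mul_assoc]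
      _ = D * Tᵀ⁻¹ := by rw [h1]
  have hinv : (Γ m)⁻¹ = Tᵀ * E * T := by
    refine Matrix.inv_eq_left_inv ?_
    have ha : (Tᵀ * E * T) * Γ m = Tᵀ * (E * (T * Γ m)) := by simp only [Matrix.mul_assoc]
    rw [ha, hTG2, ← Matrix.mul_assoc E D, h2, Matrix.one_mul,
      Matrix.mul_nonsing_inv _ hTdet]
  rw [hinv]
  have main : ∀ a b : Fin m, (a:ℕ) = p + i → (b:ℕ) = p + j →
      σ2 * (Tᵀ * E * T) a b
        = ∑ t ∈ Finset.range (m - p), psiF p φ ((t:ℤ) - i) * psiF p φ ((t:ℤ) - j) := by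
    intro a b hai hbj
    have hap : ¬ (a:ℕ) < p := by omega
    have hbp : ¬ (b:ℕ) < p := by omega
    have hTE : ∀ d : Fin m, (Tᵀ * E) a d
        = if (d:ℕ) < p then 0 else -psiF p φ ((d:ℤ) - (a:ℤ)) * σ2⁻¹ := by
      intro d
      rw [Matrix.mul_apply]
      rw [Finset.sum_eq_single d]
      · rw [Matrix.transpose_apply]
        by_cases hd : (d:ℕ) < p
        · rw [if_pos hd]
          have hz : T d a = 0 := by
            have : ¬(d:ℕ) = (a:ℕ) := by omega
            simp [hT, hd, this]
          rw [hz, zero_mul]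
        · rw [if_neg hd]
          have hE1 : E d d = σ2⁻¹ := by simp [hE, hd]
          have hT1 : T d a = -psiF p φ ((d:ℤ) - (a:ℤ)) := by simp [hT, hd]
          rw [hT1, hE1]
      · intro c _ hc
        rw [Matrix.transpose_apply]
        by_cases hcp : (c:ℕ) < p
        · have hz : T c a = 0 := by
            have : ¬(c:ℕ) = (a:ℕ) := by omega
            simp [hT, hcp, this]
          rw [hz, zero_mul]
        · have hz : E c d = 0 := by
            have hcd : ¬(c:ℕ) = (d:ℕ) := fun h => hc (Fin.ext h)
            simp [hE, hcp, hcd]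
          rw [hz, mul_zero]
      · intro hmem
        exact absurd (Finset.mem_univ d) hmem
    rw [Matrix.mul_apply]
    have hterm : ∀ d : Fin m, (Tᵀ * E) a d * T d b
        = if (d:ℕ) < p then 0
          else psiF p φ ((d:ℤ) - (a:ℤ)) * psiF p φ ((d:ℤ) - (b:ℤ)) * σ2⁻¹ := by
      intro d
      rw [hTE d]
      by_cases hd : (d:ℕ) < p
      · rw [if_pos hd, if_pos hd, zero_mul]
      · rw [if_neg hd, if_neg hd]
        have hT1 : T d b = -psiF p φ ((d:ℤ) - (b:ℤ)) := by simp [hT, hd]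
        rw [hT1]
        ring
    rw [Finset.sum_congr rfl fun d _ => hterm d]
    rw [Fin.sum_univ_eq_sum_range (fun d => if d < p then 0
      else psiF p φ ((d:ℤ) - ((a:ℕ):ℤ)) * psiF p φ ((d:ℤ) - ((b:ℕ):ℤ)) * σ2⁻¹) m]
    rw [Finset.range_eq_Ico, ← Finset.sum_Ico_consecutive _ (Nat.zero_le p) hm]
    have hzero : ∑ d ∈ Finset.Ico 0 p, (if d < p then 0
        else psiF p φ ((d:ℤ) - ((a:ℕ):ℤ)) * psiF p φ ((d:ℤ) - ((b:ℕ):ℤ)) * σ2⁻¹) = 0 := by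
      refine Finset.sum_eq_zero fun d hd => ?_
      simp only [Finset.mem_Ico] at hd
      rw [if_pos hd.2]
    rw [hzero, zero_add]
    have hre : ∑ d ∈ Finset.Ico p m, (if d < p then 0
        else psiF p φ ((d:ℤ) - ((a:ℕ):ℤ)) * psiF p φ ((d:ℤ) - ((b:ℕ):ℤ)) * σ2⁻¹)
        = ∑ t ∈ Finset.range (m - p),
            psiF p φ ((t:ℤ) - i) * psiF p φ ((t:ℤ) - j) * σ2⁻¹ := by
      refine Finset.sum_nbij' (fun d => d - p) (fun t => p + t) ?_ ?_ ?_ ?_ ?_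
      · intro d hd
        simp only [Finset.mem_Ico] at hd
        simp only [Finset.mem_range]
        omega
      · intro t ht
        simp only [Finset.mem_range] at ht
        simp only [Finset.mem_Ico]
        omega
      · intro d hd
        simp only [Finset.mem_Ico] at hd
        omega
      · intro t ht
        omega
      · intro d hd
        simp only [Finset.mem_Ico] at hd
        rw [if_neg (by omega)]
        have e1 : ((d:ℕ):ℤ) - ((a:ℕ):ℤ) = (((d - p : ℕ)):ℤ) - ((i:ℕ):ℤ) := by omega
        have e2 : ((d:ℕ):ℤ) - ((b:ℕ):ℤ) = (((d - p : ℕ)):ℤ) - ((j:ℕ):ℤ) := by omega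
        rw [e1, e2]
    rw [hre, ← Finset.sum_mul, mul_comm σ2, mul_assoc,
      inv_mul_cancel₀ (ne_of_gt hσ), mul_one, Finset.range_eq_Ico]
  exact main _ _ rfl rfl

lemma double_sum (p : ℕ) (φ : ℕ → ℝ) (n : ℕ) (hpn : p ≤ n) :
    ∑ i : Fin n, ∑ j : Fin n, ∑ t ∈ Finset.range n,
        psiF p φ ((t:ℤ) - i) * psiF p φ ((t:ℤ) - j)
      = (∑ t ∈ Finset.range p, (∑ u ∈ Finset.range (t+1), φ u)^2)
        + ((n - p : ℕ):ℝ) * (∑ u ∈ Finset.range (p+1), φ u)^2 := by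
  have hrow : ∀ t ∈ Finset.range n, ∑ i : Fin n, psiF p φ ((t:ℤ) - i)
      = ∑ u ∈ Finset.range (min t p + 1), φ u := by
    intro t ht
    simp only [Finset.mem_range] at ht
    have h1 : ∑ i : Fin n, psiF p φ ((t:ℤ) - i)
        = ∑ c ∈ Finset.range n, psiF p φ ((t:ℤ) - c) * 1 := by
      rw [Fin.sum_univ_eq_sum_range (fun c => psiF p φ ((t:ℤ) - c)) n]
      simp
    rw [h1, band_sum p n t φ ht (fun _ => 1)]
    simp
  have hswap : ∑ i : Fin n, ∑ j : Fin n, ∑ t ∈ Finset.range n,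
        psiF p φ ((t:ℤ) - i) * psiF p φ ((t:ℤ) - j)
      = ∑ t ∈ Finset.range n, (∑ i : Fin n, psiF p φ ((t:ℤ) - i))
          * (∑ j : Fin n, psiF p φ ((t:ℤ) - j)) := by
    calc ∑ i : Fin n, ∑ j : Fin n, ∑ t ∈ Finset.range n,
          psiF p φ ((t:ℤ) - i) * psiF p φ ((t:ℤ) - j)
        = ∑ i : Fin n, ∑ t ∈ Finset.range n, ∑ j : Fin n,
            psiF p φ ((t:ℤ) - i) * psiF p φ ((t:ℤ) - j) :=
          Finset.sum_congr rfl fun i _ => Finset.sum_comm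
      _ = ∑ t ∈ Finset.range n, ∑ i : Fin n, ∑ j : Fin n,
            psiF p φ ((t:ℤ) - i) * psiF p φ ((t:ℤ) - j) := Finset.sum_comm
      _ = _ := Finset.sum_congr rfl fun t _ => (Finset.sum_mul_sum _ _ _ _).symm
  rw [hswap, Finset.sum_congr rfl fun t ht => by rw [hrow t ht]]
  rw [Finset.range_eq_Ico, ← Finset.sum_Ico_consecutive _ (Nat.zero_le p) hpn]
  congr 1
  · rw [← Finset.range_eq_Ico]
    refine Finset.sum_congr rfl fun t ht => ?_
    simp only [Finset.mem_range] at ht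
    rw [Nat.min_eq_left (le_of_lt ht), sq]
  · rw [Finset.sum_congr rfl (fun t ht => ?_), Finset.sum_const, Nat.card_Ico, nsmul_eq_mul]
    simp only [Finset.mem_Ico] at ht
    rw [Nat.min_eq_right ht.1, sq]

/-- Context: AR(p) coefficients `φ`, white-noise variance `σ2`, autocovariance
sequence `γ` satisfying the Yule–Walker equations, and the autocovariance
Toeplitz matrices `Γ m`, assumed positive definite for `m ≥ 1`. -/
theorem stmt_16
    (p : ℕ) (hp : 1 ≤ p)
    (φ : ℕ → ℝ) (hφ0 : φ 0 = -1)
    (σ2 : ℝ) (hσ : 0 < σ2)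
    (γ : ℤ → ℝ)
    (hsym : ∀ j : ℤ, γ (-j) = γ j)
    (hYW0 : γ 0 = (∑ i ∈ Finset.Icc 1 p, φ i * γ (i : ℤ)) + σ2)
    (hYW : ∀ j : ℤ, 1 ≤ j → γ j = ∑ i ∈ Finset.Icc 1 p, φ i * γ (j - (i : ℤ)))
    (Γ : (m : ℕ) → Matrix (Fin m) (Fin m) ℝ)
    (hΓ : ∀ m : ℕ, ∀ i j : Fin m, Γ m i j = γ |(i : ℤ) - (j : ℤ)|)
    (hpd : ∀ m : ℕ, 1 ≤ m → (Γ m).PosDef)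
    :
    let s : ℕ → ℝ := fun m =>
      (1 / ((m - p : ℕ) : ℝ) ^ 2) * ∑ i : Fin (m - p), ∑ j : Fin (m - p),
        σ2 * (Γ m)⁻¹ ⟨p + i, by have := i.isLt; omega⟩ ⟨p + j, by have := j.isLt; omega⟩
    ∀ k : ℕ, 1 ≤ k →
      s (2 * p + k) = (1 / ((p + k : ℕ) : ℝ) ^ 2) *
        ((p : ℝ) ^ 2 * s (2 * p) + (k : ℝ) * (∑ i ∈ Finset.range (p + 1), φ i) ^ 2) := by
  intro s k hk
  have hs : ∀ m : ℕ, s m = (1 / ((m - p : ℕ) : ℝ) ^ 2) *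
      ∑ i : Fin (m - p), ∑ j : Fin (m - p),
        σ2 * (Γ m)⁻¹ ⟨p + i, by have := i.isLt; omega⟩ ⟨p + j, by have := j.isLt; omega⟩ :=
    fun m => rfl
  have hSD : ∀ m : ℕ, 2*p ≤ m →
      (∑ i : Fin (m - p), ∑ j : Fin (m - p),
        σ2 * (Γ m)⁻¹ ⟨p + i, by have := i.isLt; omega⟩ ⟨p + j, by have := j.isLt; omega⟩)
      = (∑ t ∈ Finset.range p, (∑ u ∈ Finset.range (t+1), φ u)^2)
        + (((m - p) - p : ℕ):ℝ) * (∑ u ∈ Finset.range (p+1), φ u)^2 := by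
    intro m hm2
    have hm : p ≤ m := by omega
    have hpn : p ≤ m - p := by omega
    calc (∑ i : Fin (m - p), ∑ j : Fin (m - p),
          σ2 * (Γ m)⁻¹ ⟨p + i, by have := i.isLt; omega⟩ ⟨p + j, by have := j.isLt; omega⟩)
        = ∑ i : Fin (m - p), ∑ j : Fin (m - p), ∑ t ∈ Finset.range (m - p),
            psiF p φ ((t:ℤ) - i) * psiF p φ ((t:ℤ) - j) :=
          Finset.sum_congr rfl fun i _ => Finset.sum_congr rfl fun j _ =>
            inv_entry p hp φ hφ0 σ2 hσ γ hsym hYW0 hYW Γ hΓ hpd m hm i j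
      _ = _ := double_sum p φ (m - p) hpn
  have e1 : s (2*p + k) = (1 / ((p + k : ℕ) : ℝ)^2) *
      ((∑ t ∈ Finset.range p, (∑ u ∈ Finset.range (t+1), φ u)^2)
        + (k:ℝ) * (∑ u ∈ Finset.range (p+1), φ u)^2) := by
    rw [hs, hSD (2*p+k) (by omega)]
    have n1 : 2*p + k - p = p + k := by omega
    rw [n1]
    have n2 : p + k - p = k := by omega
    rw [n2]
  have e2 : s (2*p) = (1 / ((p : ℕ) : ℝ)^2) *
      (∑ t ∈ Finset.range p, (∑ u ∈ Finset.range (t+1), φ u)^2) := by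
    rw [hs, hSD (2*p) (by omega)]
    have n1 : 2*p - p = p := by omega
    rw [n1]
    have n2 : p - p = 0 := by omega
    rw [n2]
    norm_num
  rw [e1, e2]
  congr 1
  have hp0 : ((p : ℕ) : ℝ) ≠ 0 := Nat.cast_ne_zero.2 (by omega)
  have h3 : (p : ℝ)^2 * ((1 / ((p : ℕ) : ℝ)^2) *
      (∑ t ∈ Finset.range p, (∑ u ∈ Finset.range (t+1), φ u)^2))
      = ∑ t ∈ Finset.range p, (∑ u ∈ Finset.range (t+1), φ u)^2 := by
    field_simp
  rw [h3]
end

section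
/- Adjugate recursion in the non-overlapping regime: for every integer m ≥ 2p+2 and every index 1 ≤ i ≤ m−p−1, adj(Γ_m)(p+i, p+1) = σ² · adj(Γ_{m−1})(p+i, p+1), where adj denotes the adjugate (transpose of the cofactor matrix). -/
open Matrix Finset

set_option maxHeartbeats 1000000

/-- Context: AR(p) coefficients `φ`, white-noise variance `σ2`, autocovariance
sequence `γ` satisfying the Yule–Walker equations, and the autocovariance
Toeplitz matrices `Γ m`, assumed positive definite for `m ≥ 1`. -/
theorem stmt_18
    (p : ℕ) (hp : 1 ≤ p)
    (φ : ℕ → ℝ)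
    (σ2 : ℝ) (hσ : 0 < σ2)
    (γ : ℤ → ℝ)
    (hsym : ∀ j : ℤ, γ (-j) = γ j)
    (hYW0 : γ 0 = (∑ i ∈ Finset.Icc 1 p, φ i * γ (i : ℤ)) + σ2)
    (hYW : ∀ j : ℤ, 1 ≤ j → γ j = ∑ i ∈ Finset.Icc 1 p, φ i * γ (j - (i : ℤ)))
    (Γ : (m : ℕ) → Matrix (Fin m) (Fin m) ℝ)
    (hΓ : ∀ m : ℕ, ∀ i j : Fin m, Γ m i j = γ |(i : ℤ) - (j : ℤ)|)
    (hpd : ∀ m : ℕ, 1 ≤ m → (Γ m).PosDef)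
    (m : ℕ) (hm : 2 * p + 2 ≤ m) (i : ℕ) (hi1 : 1 ≤ i) (hi2 : i ≤ m - p - 1) :
    (Γ m).adjugate ⟨p + i - 1, by omega⟩ ⟨p, by omega⟩
      = σ2 * (Γ (m - 1)).adjugate ⟨p + i - 1, by omega⟩ ⟨p, by omega⟩ := by
  obtain ⟨n, rfl⟩ : ∃ n, m = n + 1 := ⟨m - 1, by omega⟩
  have hn : 2 * p + 1 ≤ n := by omega
  have hsub : ∀ k : ℕ, n - k < n + 1 := fun k => Nat.lt_succ_of_le (Nat.sub_le n k)
  have hpn : p < n := by omega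
  have hpin : p + i - 1 < n := by omega
  have habs : ∀ x : ℤ, γ |x| = γ x := by
    intro x
    rcases abs_choice x with h | h
    · rw [h]
    · rw [h, hsym]
  rw [adjugate_apply, adjugate_apply]
  set lt : Fin (n + 1) := Fin.last n with hltdef
  set r0 : Fin (n + 1) := ⟨p, by omega⟩ with hr0
  set j0 : Fin (n + 1) := ⟨p + i - 1, by omega⟩ with hj0
  set A : Matrix (Fin (n + 1)) (Fin (n + 1)) ℝ :=
    (Γ (n + 1)).updateRow r0 (Pi.single j0 1) with hA
  -- the set of row indices n - k, k ∈ [1,p]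
  set s : Finset (Fin (n + 1)) :=
    (Finset.Icc 1 p).image (fun k => (⟨n - k, hsub k⟩ : Fin (n + 1))) with hs
  have hinj : ∀ a ∈ Finset.Icc 1 p, ∀ b ∈ Finset.Icc 1 p,
      (⟨n - a, hsub a⟩ : Fin (n + 1)) = ⟨n - b, hsub b⟩ → a = b := by
    intro a ha b hb h
    simp only [Finset.mem_Icc] at ha hb
    have := congrArg Fin.val h
    simp only at this
    omega
  have hlts : lt ∉ s := by
    rw [hs, Finset.mem_image]
    rintro ⟨k, hk, h⟩
    rw [Finset.mem_Icc] at hk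
    have hval : n - k = n := congrArg Fin.val h
    clear h
    omega
  let c : Fin (n + 1) → ℝ := fun k => -φ (n - (k : ℕ))
  have hc : ∀ k : Fin (n + 1), c k = -φ (n - (k : ℕ)) := fun _ => rfl
  -- rows used are genuine Γ rows
  have hArow : ∀ k : Fin (n + 1), (k : ℕ) ≠ p → ∀ j : Fin (n + 1),
      A k j = γ ((k : ℤ) - (j : ℤ)) := by
    intro k hk j
    rw [hA, updateRow_ne (fun h => hk (congrArg Fin.val h)), hΓ, habs]
  -- the key Yule-Walker row combination
  have key : (1 : ℝ) • A lt + ∑ k ∈ s, c k • A k = σ2 • (Pi.single lt 1 : Fin (n + 1) → ℝ) := by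
    funext j
    simp only [Pi.add_apply, Pi.smul_apply, Finset.sum_apply, one_smul, smul_eq_mul]
    have hsum2 : ∑ k ∈ s, c k * A k j
        = ∑ k ∈ Finset.Icc 1 p, (fun k : Fin (n+1) => c k * A k j) ⟨n - k, hsub k⟩ := by
      rw [hs]
      exact Finset.sum_image hinj
    have hterm : ∀ k ∈ Finset.Icc 1 p,
        (fun k : Fin (n+1) => c k * A k j) ⟨n - k, hsub k⟩
          = -(φ k * γ (((n : ℤ) - (j : ℤ)) - (k : ℤ))) := by
      intro k hk
      simp only [Finset.mem_Icc] at hk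
      show c ⟨n - k, hsub k⟩ * A ⟨n - k, hsub k⟩ j = _
      have hne : ((⟨n - k, hsub k⟩ : Fin (n + 1)) : ℕ) ≠ p := by
        show n - k ≠ p
        omega
      rw [hArow ⟨n - k, hsub k⟩ hne j, hc]
      have h1 : n - ((⟨n - k, hsub k⟩ : Fin (n + 1)) : ℕ) = k := by
        show n - (n - k) = k
        omega
      rw [h1]
      have h2 : (((⟨n - k, hsub k⟩ : Fin (n + 1)) : ℤ)) - (j : ℤ)
          = ((n : ℤ) - (j : ℤ)) - (k : ℤ) := by
        show ((n - k : ℕ) : ℤ) - (j : ℤ) = _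
        omega
      rw [h2]
      ring
    have hsum3 : ∑ k ∈ Finset.Icc 1 p, (fun k : Fin (n+1) => c k * A k j) ⟨n - k, hsub k⟩
        = ∑ k ∈ Finset.Icc 1 p, -(φ k * γ (((n : ℤ) - (j : ℤ)) - (k : ℤ))) :=
      Finset.sum_congr rfl hterm
    rw [hsum2, hsum3, Finset.sum_neg_distrib]
    have hlt_ne : ((lt : Fin (n + 1)) : ℕ) ≠ p := by
      show n ≠ p
      omega
    rw [hArow lt hlt_ne j]
    have hltv : ((lt : Fin (n + 1)) : ℤ) = (n : ℤ) := rfl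
    rw [hltv]
    by_cases hj : j = lt
    · subst hj
      rw [hltv, sub_self, hYW0, Pi.single_eq_same]
      have hcong : ∀ k ∈ Finset.Icc 1 p, φ k * γ ((0 : ℤ) - (k : ℤ)) = φ k * γ (k : ℤ) := by
        intro k hk
        rw [show (0 : ℤ) - (k : ℤ) = -(k : ℤ) by ring, hsym]
      rw [Finset.sum_congr rfl hcong]
      ring
    · have hjlt : (j : ℕ) < n := by
        have h1 := j.isLt
        have h2 : (j : ℕ) ≠ n := fun h => hj (Fin.ext h)
        omega
      have h1 : (1 : ℤ) ≤ (n : ℤ) - (j : ℤ) := by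
        clear hj
        omega
      rw [← hYW _ h1, Pi.single_eq_of_ne hj]
      ring
  have step1 : (A.updateRow lt ((1 : ℝ) • A lt + ∑ k ∈ s, c k • A k)).det
      = (1 : ℝ) • A.det := det_updateRow_sum_aux A s hlts c 1
  rw [key, one_smul] at step1
  rw [det_updateRow_smul] at step1
  -- so A.det = σ2 * det (A.updateRow lt (Pi.single lt 1))
  set M : Matrix (Fin (n + 1)) (Fin (n + 1)) ℝ := A.updateRow lt (Pi.single lt 1) with hM
  have step2 : A.det = σ2 * M.det := step1.symm
  rw [step2]
  congr 1
  -- Laplace expansion along the last row of M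
  have hMlast : ∀ j : Fin n, M lt (Fin.castSucc j) = 0 := by
    intro j
    rw [hM, updateRow_self]
    exact Pi.single_eq_of_ne (Fin.castSucc_lt_last j).ne 1
  rw [det_succ_row M lt]
  rw [Fin.sum_univ_castSucc]
  have hz : ∑ j : Fin n, (-1 : ℝ) ^ ((lt : ℕ) + (Fin.castSucc j : ℕ)) * M lt (Fin.castSucc j)
      * det (M.submatrix lt.succAbove (Fin.castSucc j).succAbove) = 0 := by
    refine Finset.sum_eq_zero ?_
    intro j _
    rw [hMlast j]
    ring
  rw [hz, zero_add]
  have hMll : M lt lt = 1 := by rw [hM, updateRow_self, Pi.single_eq_same]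
  rw [hMll]
  have hsign : (-1 : ℝ) ^ ((lt : ℕ) + ((Fin.last n) : ℕ)) = 1 := by
    simp only [hltdef, Fin.val_last]
    rw [← two_mul, pow_mul]
    norm_num
  rw [hsign, one_mul, one_mul, Fin.succAbove_last]
  show ((M.submatrix Fin.castSucc Fin.castSucc).det : ℝ)
      = ((Γ n).updateRow (⟨p, hpn⟩ : Fin n)
          (Pi.single (⟨p + i - 1, hpin⟩ : Fin n) 1)).det
  congr 1
  ext r c'
  simp only [submatrix_apply]
  have hne : Fin.castSucc r ≠ lt := (Fin.castSucc_lt_last r).ne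
  rw [hM, updateRow_ne hne, hA]
  by_cases hr : (r : ℕ) = p
  · have h1 : Fin.castSucc r = r0 := by
      simp [Fin.ext_iff, hr0, hr]
    have h2 : r = (⟨p, hpn⟩ : Fin n) := by simp [Fin.ext_iff, hr]
    rw [h1, h2, updateRow_self, updateRow_self]
    simp [Pi.single_apply, Fin.ext_iff, hj0]
  · have h1 : Fin.castSucc r ≠ r0 := by
      simp [Fin.ext_iff, hr0]; exact hr
    have h2 : r ≠ (⟨p, hpn⟩ : Fin n) := by
      simp [Fin.ext_iff]; exact hr
    rw [updateRow_ne h1, updateRow_ne h2, hΓ, hΓ]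
    simp
end

section
/- Corner entries of the adjugate: for every integer m with p+2 ≤ m ≤ 2p+1, adj(Γ_m)(m, p+1) = −φ_{m−p−1} · det(Γ_{m−1}), and for every integer m ≥ 2p+2, adj(Γ_m)(m, p+1) = 0, where adj denotes the adjugate (transpose of the cofactor matrix). -/
open Matrix Finset

/-- auxiliary: standard basis vector. -/
def sgl (n : ℕ) (j : Fin n) : Fin n → ℝ := Pi.single j 1

lemma sgl_eq_same (n : ℕ) (j : Fin n) : sgl n j j = 1 := Pi.single_eq_same j 1

lemma sgl_eq_of_ne (n : ℕ) {i j : Fin n} (h : i ≠ j) : sgl n j i = 0 :=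
  Pi.single_eq_of_ne h 1

lemma mulVec_sgl (n : ℕ) (M : Matrix (Fin n) (Fin n) ℝ) (j : Fin n) :
    M *ᵥ sgl n j = fun i => M i j := by
  funext i
  rw [sgl, Matrix.mulVec_single]
  simp

/-- Context: AR(p) coefficients `φ`, white-noise variance `σ2`, autocovariance
sequence `γ` satisfying the Yule–Walker equations, and the autocovariance
Toeplitz matrices `Γ m`, assumed positive definite for `m ≥ 1`. -/
theorem stmt_19
    (p : ℕ) (hp : 1 ≤ p)
    (φ : ℕ → ℝ)
    (σ2 : ℝ) (hσ : 0 < σ2)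
    (γ : ℤ → ℝ)
    (hsym : ∀ j : ℤ, γ (-j) = γ j)
    (hYW0 : γ 0 = (∑ i ∈ Finset.Icc 1 p, φ i * γ (i : ℤ)) + σ2)
    (hYW : ∀ j : ℤ, 1 ≤ j → γ j = ∑ i ∈ Finset.Icc 1 p, φ i * γ (j - (i : ℤ)))
    (Γ : (m : ℕ) → Matrix (Fin m) (Fin m) ℝ)
    (hΓ : ∀ m : ℕ, ∀ i j : Fin m, Γ m i j = γ |(i : ℤ) - (j : ℤ)|)
    (hpd : ∀ m : ℕ, 1 ≤ m → (Γ m).PosDef)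
    :
    (∀ (m : ℕ) (hm1 : p + 2 ≤ m) (hm2 : m ≤ 2 * p + 1),
      (Γ m).adjugate ⟨m - 1, by omega⟩ ⟨p, by omega⟩ = -(φ (m - p - 1)) * (Γ (m - 1)).det) ∧
    (∀ (m : ℕ) (hm : 2 * p + 2 ≤ m),
      (Γ m).adjugate ⟨m - 1, by omega⟩ ⟨p, by omega⟩ = 0) := by
  have habs : ∀ j : ℤ, γ |j| = γ j := by
    intro j
    rcases abs_choice j with h | h
    · rw [h]
    · rw [h, hsym]
  have hΓ' : ∀ (m : ℕ) (i j : Fin m), Γ m i j = γ ((i : ℤ) - (j : ℤ)) := by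
    intro m i j; rw [hΓ, habs]
  have key : ∀ (n : ℕ) (hn : p + 1 ≤ n),
      (Γ (n+1)).adjugate (Fin.last n) ⟨p, by omega⟩ =
        (Γ n).det * (if n - p ∈ Finset.Icc 1 p then -φ (n - p) else 0) := by
    intro n hn
    have hfp : p < n + 1 := by omega
    -- the vector u
    set u : Fin (n+1) → ℝ :=
      sgl (n+1) (Fin.last n) -
        ∑ k ∈ Finset.Icc 1 p,
          φ k • sgl (n+1) ⟨n - k, by omega⟩ with hudef
    -- entries of Γ(n+1) *ᵥ u
    have hentry : ∀ i : Fin (n+1), (Γ (n+1) *ᵥ u) i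
        = γ ((i : ℤ) - (n : ℤ))
          - ∑ k ∈ Finset.Icc 1 p, φ k * γ ((i : ℤ) - ((n : ℤ) - (k : ℤ))) := by
      intro i
      rw [hudef, mulVec_sub]
      have hsum : Γ (n+1) *ᵥ (∑ k ∈ Finset.Icc 1 p,
          φ k • sgl (n+1) ⟨n - k, by omega⟩)
          = ∑ k ∈ Finset.Icc 1 p,
              φ k • (Γ (n+1) *ᵥ sgl (n+1) ⟨n - k, by omega⟩) := by
        rw [← Matrix.mulVecLin_apply, map_sum]
        simp [Matrix.mulVecLin_apply, Matrix.mulVec_smul]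
      rw [hsum]
      simp only [Pi.sub_apply, Finset.sum_apply, Pi.smul_apply, mulVec_sgl,
        smul_eq_mul]
      congr 1
      · rw [hΓ' (n+1) i (Fin.last n)]
        simp [Fin.last]
      · refine Finset.sum_congr rfl fun k hk => ?_
        have hk1 : 1 ≤ k := (Finset.mem_Icc.mp hk).1
        have hk2 : k ≤ p := (Finset.mem_Icc.mp hk).2
        rw [hΓ' (n+1) i ⟨n - k, by omega⟩]
        congr 2
        push_cast [Nat.cast_sub (by omega : k ≤ n)]
        ring
    have hu : Γ (n+1) *ᵥ u = σ2 • sgl (n+1) (Fin.last n) := by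
      funext i
      rw [hentry i]
      rcases eq_or_ne i (Fin.last n) with hi | hi
      · subst hi
        have : ((Fin.last n : Fin (n+1)) : ℤ) = (n : ℤ) := by simp [Fin.last]
        rw [this]
        have h0 : (n : ℤ) - (n : ℤ) = 0 := by ring
        rw [h0, hYW0]
        simp only [Pi.smul_apply, smul_eq_mul, sgl_eq_same, mul_one]
        have : ∀ k ∈ Finset.Icc 1 p, φ k * γ ((n : ℤ) - ((n:ℤ) - (k:ℤ))) = φ k * γ (k : ℤ) := by
          intro k hk; congr 2; ring
        rw [Finset.sum_congr rfl this]
        ring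
      · have hil : (i : ℕ) < n := by
          have := i.isLt
          have : (i : ℕ) ≠ n := fun h => hi (Fin.ext (by simp [Fin.last, h]))
          omega
        have hj1 : (1 : ℤ) ≤ (n : ℤ) - (i : ℤ) := by
          have : ((i : ℕ) : ℤ) < (n : ℤ) := by exact_mod_cast hil
          omega
        have h1 : γ ((i : ℤ) - (n : ℤ)) = γ ((n : ℤ) - (i : ℤ)) := by
          rw [← hsym]; congr 1; ring
        have h2 : ∀ k ∈ Finset.Icc 1 p,
            φ k * γ ((i : ℤ) - ((n:ℤ) - (k:ℤ))) = φ k * γ (((n:ℤ) - (i:ℤ)) - (k:ℤ)) := by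
          intro k hk; rw [← hsym]; congr 2; ring
        rw [h1, Finset.sum_congr rfl h2, ← hYW _ hj1]
        simp [sgl_eq_of_ne (n+1) hi]
    -- adjugate identity
    have hadj : ∀ i : Fin (n+1),
        σ2 * (Γ (n+1)).adjugate i (Fin.last n) = (Γ (n+1)).det * u i := by
      intro i
      have h1 : (Γ (n+1)).adjugate *ᵥ (Γ (n+1) *ᵥ u) = (Γ (n+1)).det • u := by
        rw [mulVec_mulVec, Matrix.adjugate_mul, smul_mulVec, one_mulVec]
      rw [hu] at h1
      have h2 := congrFun h1 i
      rw [Matrix.mulVec_smul, mulVec_sgl] at h2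
      simpa [mul_comm] using h2
    -- adjugate at (last, last) is det of Γ n
    have hll : (Γ (n+1)).adjugate (Fin.last n) (Fin.last n) = (Γ n).det := by
      rw [Matrix.adjugate_apply]
      rw [Matrix.det_succ_row _ (Fin.last n)]
      rw [Finset.sum_eq_single (Fin.last n)]
      · simp only [Matrix.updateRow_self, Pi.single_eq_same]
        have hsub : ((Γ (n+1)).updateRow (Fin.last n) (Pi.single (Fin.last n) 1)).submatrix
            (Fin.last n).succAbove (Fin.last n).succAbove = Γ n := by
          ext a b
          rw [Matrix.submatrix_apply]
          rw [Matrix.updateRow_ne (Fin.succAbove_ne _ _)]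
          rw [hΓ' (n+1), hΓ' n]
          simp [Fin.succAbove_last]
        rw [hsub]
        have : (-1 : ℝ) ^ ((Fin.last n : ℕ) + (Fin.last n : ℕ)) = 1 := by
          simp [Fin.last, pow_add, ← mul_pow]
        rw [this]; ring
      · intro j _ hj
        rw [Matrix.updateRow_self, Pi.single_eq_of_ne hj]
        ring
      · intro h; exact absurd (Finset.mem_univ _) h
    -- value of det Γ(n+1)
    have hdet : (Γ (n+1)).det = σ2 * (Γ n).det := by
      have := hadj (Fin.last n)
      rw [hll] at this
      have hulast : u (Fin.last n) = 1 := by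
        rw [hudef]
        simp only [Pi.sub_apply, Pi.single_eq_same, Finset.sum_apply, Pi.smul_apply,
          smul_eq_mul]
        have : ∀ k ∈ Finset.Icc 1 p,
            φ k * sgl (n+1) ⟨n - k, by omega⟩ (Fin.last n) = 0 := by
          intro k hk
          have hk1 : 1 ≤ k := (Finset.mem_Icc.mp hk).1
          have hk2 : k ≤ p := (Finset.mem_Icc.mp hk).2
          rw [sgl_eq_of_ne]
          · ring
          · intro h
            have : n = n - k := by simpa [Fin.last, Fin.ext_iff] using h
            omega
        rw [Finset.sum_congr rfl this]
        simp [sgl_eq_same]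
      rw [hulast, mul_one] at this
      linarith
    -- value of u at p
    have hup : u ⟨p, hfp⟩ = (if n - p ∈ Finset.Icc 1 p then -φ (n - p) else 0) := by
      rw [hudef]
      simp only [Pi.sub_apply, Finset.sum_apply, Pi.smul_apply, smul_eq_mul]
      have hp0 : sgl (n+1) (Fin.last n) ⟨p, hfp⟩ = 0 := by
        rw [sgl_eq_of_ne]
        intro h
        have : p = n := by simpa [Fin.last, Fin.ext_iff] using h
        omega
      rw [hp0]
      by_cases hnp : n - p ∈ Finset.Icc 1 p
      · rw [Finset.sum_eq_single_of_mem (n - p) hnp]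
        · have heq : (⟨p, hfp⟩ : Fin (n+1)) = ⟨n - (n-p), by omega⟩ := by
            apply Fin.ext; simp; omega
          rw [heq, sgl_eq_same, if_pos hnp]
          ring
        · intro k hk hkne
          rw [sgl_eq_of_ne]
          · ring
          · intro h
            have hk2 : k ≤ p := (Finset.mem_Icc.mp hk).2
            have : p = n - k := by simpa [Fin.ext_iff] using h
            omega
      · rw [Finset.sum_eq_zero]
        · rw [if_neg hnp]; ring
        · intro k hk
          have hk1 : 1 ≤ k := (Finset.mem_Icc.mp hk).1
          have hk2 : k ≤ p := (Finset.mem_Icc.mp hk).2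
          rw [sgl_eq_of_ne]
          · ring
          · intro h
            have hpk : p = n - k := by simpa [Fin.ext_iff] using h
            have hkk : k = n - p := by omega
            exact hnp (by rw [← hkk]; exact hk)
    -- symmetry of adjugate
    have hsymm : (Γ (n+1)).adjugate (Fin.last n) ⟨p, hfp⟩
        = (Γ (n+1)).adjugate ⟨p, hfp⟩ (Fin.last n) := by
      have hT : (Γ (n+1))ᵀ = Γ (n+1) := by
        ext a b
        rw [Matrix.transpose_apply, hΓ, hΓ, abs_sub_comm]
      have := Matrix.adjugate_transpose (Γ (n+1))
      rw [hT] at this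
      have := congrFun (congrFun this (Fin.last n)) ⟨p, hfp⟩
      simpa [Matrix.transpose_apply] using this.symm
    -- conclude
    have hfinal := hadj ⟨p, hfp⟩
    rw [hdet, hup] at hfinal
    rw [hsymm]
    have h := mul_left_cancel₀ (ne_of_gt hσ) (by linarith [hfinal] : σ2 * (Γ (n+1)).adjugate ⟨p, hfp⟩ (Fin.last n) = σ2 * ((Γ n).det * (if n - p ∈ Finset.Icc 1 p then -φ (n - p) else 0)))
    exact h
  constructor
  · intro m hm1 hm2
    obtain ⟨n, rfl⟩ : ∃ n, m = n + 1 := ⟨m - 1, by omega⟩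
    have hn : p + 1 ≤ n := by omega
    have hkey := key n hn
    have hmem : n - p ∈ Finset.Icc 1 p := by
      rw [Finset.mem_Icc]; omega
    rw [if_pos hmem] at hkey
    have he : (⟨n + 1 - 1, by omega⟩ : Fin (n+1)) = Fin.last n := by
      apply Fin.ext; simp [Fin.last]
    rw [he, hkey]
    have h2 : n + 1 - p - 1 = n - p := by omega
    have h3 : n + 1 - 1 = n := by omega
    rw [h2, h3]
    ring
  · intro m hm
    obtain ⟨n, rfl⟩ : ∃ n, m = n + 1 := ⟨m - 1, by omega⟩
    have hn : p + 1 ≤ n := by omega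
    have hkey := key n hn
    have hmem : n - p ∉ Finset.Icc 1 p := by
      rw [Finset.mem_Icc]; omega
    rw [if_neg hmem, mul_zero] at hkey
    have he : (⟨n + 1 - 1, by omega⟩ : Fin (n+1)) = Fin.last n := by
      apply Fin.ext; simp [Fin.last]
    rw [he, hkey]
end
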